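/- arXiv:2601.21471 — 2 statements merged into one kernel-verified Lean document; each statement's English description precedes it below -/
import Mathlib

section
/- Let (X, F) be random with g(X, F) = E[(Y − F)² | X, F] ≥ 0, and consider audit policies π: range(X,F) → [π_min, 1] with E[π(X,F)] ≤ ρ. Among all such policies, the objective J(π) = E[g(X,F)/π(X,F)] is minimized by a policy of the form π*(x,f) = clip(sqrt(g(x,f))/sqrt(λ), π_min, 1) for some Lagrange multiplier λ > 0 chosen so the budget constraint binds (assuming feasibility): for any feasible π and the λ achieving E[π*] = ρ, J(π) ≥ J(π*). -/
open MeasureTheory Real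

lemma key_ineq (G lam πmin p : ℝ) (hG : 0 ≤ G) (hlam : 0 < lam)
    (hπ : 0 < πmin) (h1 : πmin ≤ 1) (hp1 : πmin ≤ p) (hp2 : p ≤ 1) :
    G / min (max (Real.sqrt (G / lam)) πmin) 1 + lam * min (max (Real.sqrt (G / lam)) πmin) 1
      ≤ G / p + lam * p := by
  set s := Real.sqrt (G / lam) with hs
  have hs0 : 0 ≤ s := Real.sqrt_nonneg _
  have hs2 : lam * s ^ 2 = G := by
    rw [hs, sq_sqrt (by positivity)]
    field_simp
  set q := min (max s πmin) 1 with hq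
  have hqpos : 0 < q := lt_min (lt_of_lt_of_le hπ (le_max_right _ _)) one_pos
  have hppos : 0 < p := lt_of_lt_of_le hπ hp1
  have hkey : 0 ≤ (p - q) * (lam * p * q - G) := by
    rcases le_total s πmin with h | h
    · have hq' : q = πmin := by
        rw [hq, max_eq_right h, min_eq_left h1]
      rw [hq']
      have h2 : s * s ≤ πmin * πmin := mul_self_le_mul_self hs0 h
      apply mul_nonneg (by linarith)
      nlinarith [mul_le_mul_of_nonneg_right hp1 hπ.le, sq_abs s]
    · rcases le_total s 1 with h2 | h2
      · have hq' : q = s := by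
          rw [hq, max_eq_left h, min_eq_left h2]
        rw [hq']
        have : (p - s) * (lam * p * s - G) = lam * s * (p - s) ^ 2 := by
          rw [← hs2]; ring
        rw [this]; positivity
      · have hq' : q = 1 := by
          rw [hq, min_eq_right (le_trans h2 (le_max_left _ _))]
        rw [hq']
        have h3 : 1 * 1 ≤ s * s := mul_self_le_mul_self zero_le_one h2
        have h4 : lam * p * 1 - G ≤ 0 := by nlinarith
        nlinarith
  rw [← sub_nonneg]
  have heq : G / p + lam * p - (G / q + lam * q)
      = (p - q) * (lam * p * q - G) / (p * q) := by
    field_simp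
    ring
  rw [heq]
  positivity

/-- Oracle optimal auditing: among all audit policies `π` with values in
`[π_min, 1]` and budget `E[π] ≤ ρ`, the objective `J(π) = E[g/π]` is minimized
by the clipped square-root rule `π*(ω) = clip(√(g(ω)/λ), π_min, 1)`, where the
multiplier `λ > 0` is chosen so the budget constraint binds (`E[π*] = ρ`). -/
theorem oracle_optimal_auditing
    {Ω : Type*} [MeasurableSpace Ω] (P : Measure Ω) [IsProbabilityMeasure P]
    (g : Ω → ℝ) (hg : Measurable g) (hg0 : ∀ ω, 0 ≤ g ω) (hgint : Integrable g P)
    (πmin ρ lam : ℝ) (hπmin : 0 < πmin) (hπmin1 : πmin ≤ 1) (hlam : 0 < lam)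
    (πstar : Ω → ℝ)
    (hπstar : ∀ ω, πstar ω = min (max (Real.sqrt (g ω / lam)) πmin) 1)
    (hbind : ∫ ω, πstar ω ∂P = ρ) :
    ∀ pol : Ω → ℝ, Measurable pol → (∀ ω, πmin ≤ pol ω ∧ pol ω ≤ 1) →
      (∫ ω, pol ω ∂P) ≤ ρ →
      (∫ ω, g ω / πstar ω ∂P) ≤ ∫ ω, g ω / pol ω ∂P := by
  intro pol hpol hpolb hbud
  -- basic bounds on πstar
  have hπsb : ∀ ω, πmin ≤ πstar ω ∧ πstar ω ≤ 1 := by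
    intro ω
    rw [hπstar ω]
    exact ⟨le_min (le_max_right _ _) hπmin1, min_le_right _ _⟩
  have hπs_meas : Measurable πstar := by
    have : πstar = fun ω => min (max (Real.sqrt (g ω / lam)) πmin) 1 := funext hπstar
    rw [this]
    exact (((hg.div_const lam).sqrt.max measurable_const).min measurable_const)
  -- integrability of bounded measurable functions wrt probability measure
  have bdd_int : ∀ (f : Ω → ℝ), Measurable f → (∀ ω, πmin ≤ f ω ∧ f ω ≤ 1) →
      Integrable f P := by
    intro f hf hfb
    refine Integrable.mono' (integrable_const 1) hf.aestronglyMeasurable ?_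
    filter_upwards with ω
    rw [Real.norm_eq_abs, abs_of_nonneg (le_trans hπmin.le (hfb ω).1)]
    exact (hfb ω).2
  have hπs_int : Integrable πstar P := bdd_int πstar hπs_meas hπsb
  have hpol_int : Integrable pol P := bdd_int pol hpol hpolb
  -- integrability of g / f for bounded-below f
  have div_int : ∀ (f : Ω → ℝ), Measurable f → (∀ ω, πmin ≤ f ω ∧ f ω ≤ 1) →
      Integrable (fun ω => g ω / f ω) P := by
    intro f hf hfb
    refine Integrable.mono' (hgint.div_const πmin) (hg.div hf).aestronglyMeasurable ?_
    filter_upwards with ω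
    have hfpos : 0 < f ω := lt_of_lt_of_le hπmin (hfb ω).1
    rw [Real.norm_eq_abs, abs_of_nonneg (div_nonneg (hg0 ω) hfpos.le)]
    gcongr
    · exact hg0 ω
    · exact (hfb ω).1
  have hdivs : Integrable (fun ω => g ω / πstar ω) P := div_int πstar hπs_meas hπsb
  have hdivp : Integrable (fun ω => g ω / pol ω) P := div_int pol hpol hpolb
  -- pointwise Lagrangian inequality
  have hpt : ∀ ω, g ω / πstar ω + lam * πstar ω ≤ g ω / pol ω + lam * pol ω := by
    intro ω
    rw [hπstar ω]
    exact key_ineq (g ω) lam πmin (pol ω) (hg0 ω) hlam hπmin hπmin1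
      (hpolb ω).1 (hpolb ω).2
  have hmono : ∫ ω, (g ω / πstar ω + lam * πstar ω) ∂P
      ≤ ∫ ω, (g ω / pol ω + lam * pol ω) ∂P := by
    refine integral_mono (hdivs.add (hπs_int.const_mul lam))
      (hdivp.add (hpol_int.const_mul lam)) hpt
  rw [integral_add hdivs (hπs_int.const_mul lam),
      integral_add hdivp (hpol_int.const_mul lam),
      integral_const_mul, integral_const_mul, hbind] at hmono
  have : lam * ∫ ω, pol ω ∂P ≤ lam * ρ :=
    mul_le_mul_of_nonneg_left hbud hlam.le
  linarith
end

section
/- Let (Z_t) be a martingale difference sequence with |Z_t| ≤ c almost surely for a constant c > 0, and let S_n = Z_1 + ⋯ + Z_n. Then for any fixed λ ∈ (0, 1/c) the process exp(λ S_n − λ²/(2(1−λc)) · Σ_{t≤n} E[Z_t² | F_{t−1}]) is a supermartingale, and consequently for any stopping time, Bernstein-type time-uniform deviation bounds hold: P(∃n: S_n ≥ λ/(2(1−λc)) · V_n + log(1/α)/λ) ≤ α where V_n = Σ_{t≤n} E[Z_t² | F_{t−1}]. -/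
open MeasureTheory Real Finset
open scoped NNReal ENNReal

section Helpers

lemma quad_deriv (a y : ℝ) :
    HasDerivAt (fun y : ℝ => 1 + y + a * y^2 - Real.exp y) (1 + a * (2*y) - Real.exp y) y := by
  have h1 : HasDerivAt (fun y : ℝ => 1 + y) 1 y := by
    simpa using (hasDerivAt_id y).const_add 1
  have h2 : HasDerivAt (fun y : ℝ => a * y^2) (a * (2*y)) y := by
    simpa using ((hasDerivAt_pow 2 y)).const_mul a
  exact ((h1.add h2).sub (Real.hasDerivAt_exp y))

lemma exp_le_quad_neg {x : ℝ} (hx : x ≤ 0) : Real.exp x ≤ 1 + x + (1/2) * x^2 := by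
  have h : AntitoneOn (fun y : ℝ => 1 + y + (1/2) * y^2 - Real.exp y) (Set.Iic 0) := by
    apply antitoneOn_of_deriv_nonpos (convex_Iic 0)
    · fun_prop
    · fun_prop
    · intro y hy
      rw [(quad_deriv (1/2) y).deriv]
      have := Real.add_one_le_exp y
      linarith
  have := h (Set.mem_Iic.2 hx) (Set.mem_Iic.2 le_rfl) hx
  simp only [Real.exp_zero] at this
  linarith

lemma exp_le_quad {b x : ℝ} (hb0 : 0 ≤ b) (hb1 : b < 1) (hx : x ≤ b) :
    Real.exp x ≤ 1 + x + (2*(1-b))⁻¹ * x^2 := by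
  have h1b : (0:ℝ) < 1 - b := by linarith
  have ha : (1:ℝ)/2 ≤ (2*(1-b))⁻¹ := by
    rw [div_le_iff₀ (by norm_num), inv_mul_eq_div, le_div_iff₀ (by linarith)]
    nlinarith
  rcases le_or_gt x 0 with h0 | h0
  · have := exp_le_quad_neg h0
    nlinarith [sq_nonneg x]
  · have h : MonotoneOn (fun y : ℝ => 1 + y + (2*(1-b))⁻¹ * y^2 - Real.exp y) (Set.Icc 0 b) := by
      apply monotoneOn_of_deriv_nonneg (convex_Icc 0 b)
      · fun_prop
      · fun_prop
      · intro y hy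
        rw [interior_Icc] at hy
        obtain ⟨hy0, hyb⟩ := hy
        rw [(quad_deriv ((2*(1-b))⁻¹) y).deriv]
        have h1y : (0:ℝ) < 1 - y := by linarith
        have hexp : Real.exp y * (1 - y) ≤ 1 := by
          have := Real.add_one_le_exp (-y)
          calc Real.exp y * (1 - y) ≤ Real.exp y * Real.exp (-y) := by
                apply mul_le_mul_of_nonneg_left (by linarith) (Real.exp_pos y).le
            _ = 1 := by rw [← Real.exp_add]; simp
        have hexp' : Real.exp y ≤ (1-y)⁻¹ := by
          rw [le_inv_comm₀ (Real.exp_pos y) h1y, ← Real.exp_neg]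
          linarith [Real.add_one_le_exp (-y)]
        have hkey : (1-y)⁻¹ ≤ 1 + (2*(1-b))⁻¹ * (2*y) := by
          rw [inv_le_iff_one_le_mul₀ h1y]
          have : (2*(1-b))⁻¹ * (2*y) = y / (1-b) := by field_simp
          rw [this]
          have : (1 + y/(1-b)) * (1-y) - 1 = y*(b-y)/(1-b) := by field_simp; ring
          nlinarith [mul_nonneg (mul_nonneg hy0.le (by linarith : (0:ℝ) ≤ b - y)) (le_of_lt (inv_pos.2 h1b)), div_nonneg (mul_nonneg hy0.le (by linarith : (0:ℝ) ≤ b - y)) h1b.le]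
        linarith
    have := h (Set.mem_Icc.2 ⟨le_rfl, hb0⟩) (Set.mem_Icc.2 ⟨h0.le, hx⟩) h0.le
    simp only [Real.exp_zero] at this
    nlinarith

lemma super_maximal {Ω : Type*} {m0 : MeasurableSpace Ω} {μ : Measure Ω} [IsFiniteMeasure μ]
    {𝒢 : Filtration ℕ m0} {f : ℕ → Ω → ℝ} (hf : Supermartingale f 𝒢 μ)
    (hnonneg : 0 ≤ f) {ε : ℝ≥0} (n : ℕ) :
    (ε : ℝ≥0∞) * μ {ω | (ε : ℝ) ≤ (range (n + 1)).sup' nonempty_range_add_one fun k => f k ω} ≤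
      ENNReal.ofReal (∫ ω, f 0 ω ∂μ) := by
  set τ : Ω → ℕ∞ := fun ω ↦ (hittingBtwn f {y : ℝ | ↑ε ≤ y} 0 n ω : ℕ) with hτdef
  have hτ : IsStoppingTime 𝒢 τ := hf.stronglyAdapted.adapted.isStoppingTime_hittingBtwn measurableSet_Ici
  have hτ_le : ∀ ω, τ ω ≤ n := fun ω => by
    show ((hittingBtwn f {y : ℝ | ↑ε ≤ y} 0 n ω : ℕ) : ℕ∞) ≤ n
    exact_mod_cast hittingBtwn_le (u := f) (s := {y : ℝ | ↑ε ≤ y}) (n := 0) (m := n) ω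
  have hint : Integrable (stoppedValue f τ) μ :=
    integrable_stoppedValue ℕ hτ hf.integrable hτ_le
  -- on the event, stoppedValue ≥ ε
  have hev : ∀ ω, ((ε : ℝ) ≤ (range (n + 1)).sup' nonempty_range_add_one fun k => f k ω) →
      (ε : ℝ) ≤ stoppedValue f τ ω := by
    intro x hx
    simp_rw [le_sup'_iff, mem_range, Nat.lt_succ_iff] at hx
    refine stoppedValue_hittingBtwn_mem ?_
    simp only [Set.mem_setOf_eq, exists_prop, Set.mem_Icc, Set.mem_ofPred_eq]
    obtain ⟨j, hj₁, hj₂⟩ := hx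
    exact ⟨j, ⟨Nat.zero_le _, hj₁⟩, hj₂⟩
  have hmeas : MeasurableSet {ω | (ε : ℝ) ≤ (range (n + 1)).sup' nonempty_range_add_one fun k => f k ω} :=
    measurableSet_le measurable_const
      (Finset.measurable_range_sup'' fun k _ => (hf.stronglyMeasurable k).measurable.le (𝒢.le k))
  have h1 := setIntegral_ge_of_const_le_real hmeas (measure_ne_top _ _) hev hint.integrableOn
  -- ∫ over set ≤ ∫ total
  have h2 : ∫ ω in {ω | (ε : ℝ) ≤ (range (n + 1)).sup' nonempty_range_add_one fun k => f k ω},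
      stoppedValue f τ ω ∂μ ≤ ∫ ω, stoppedValue f τ ω ∂μ := by
    apply setIntegral_le_integral hint
    filter_upwards with ω
    exact hnonneg _ _
  -- optional stopping for supermartingale
  have h3 : ∫ ω, stoppedValue f τ ω ∂μ ≤ ∫ ω, f 0 ω ∂μ := by
    have := hf.neg.expected_stoppedValue_mono (isStoppingTime_const 𝒢 0) hτ
      (fun ω => zero_le) hτ_le
    rw [stoppedValue_const] at this
    simp only [stoppedValue, Pi.neg_apply, integral_neg, neg_le_neg_iff] at this
    exact this
  calc (ε : ℝ≥0∞) * μ _ ≤ ENNReal.ofReal (∫ ω in {ω | (ε : ℝ) ≤ (range (n + 1)).sup'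
        nonempty_range_add_one fun k => f k ω}, stoppedValue f τ ω ∂μ) := by
        rw [ENNReal.le_ofReal_iff_toReal_le (ENNReal.mul_ne_top (by simp) (measure_ne_top _ _))
          (le_trans (mul_nonneg ε.coe_nonneg ENNReal.toReal_nonneg) h1)]
        rw [ENNReal.toReal_mul]
        simpa [measureReal_def] using h1
    _ ≤ ENNReal.ofReal (∫ ω, f 0 ω ∂μ) := ENNReal.ofReal_le_ofReal (h2.trans h3)
end Helpers

/-- Bernstein/Freedman-type supermartingale and time-uniform deviation bound:
for a bounded martingale difference sequence `|Z_t| ≤ c` with conditional variance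
process `V_n = Σ_{t≤n} E[Z_t² | F_{t−1}]`, and `0 < λ < 1/c`, the process
`exp(λ S_n − λ²/(2(1−λc)) V_n)` is a supermartingale, and
`P(∃ n : S_n ≥ λ/(2(1−λc)) V_n + log(1/α)/λ) ≤ α`. -/
theorem bernstein_time_uniform
    {Ω : Type*} {m0 : MeasurableSpace Ω} (P : Measure Ω) [IsProbabilityMeasure P]
    (ℱ : Filtration ℕ m0) (Z : ℕ → Ω → ℝ) (c : ℝ) (hc : 0 < c)
    (hadapted : ∀ t, StronglyMeasurable[ℱ (t + 1)] (Z (t + 1)))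
    (hbdd : ∀ t, ∀ᵐ ω ∂P, |Z (t + 1) ω| ≤ c)
    (hmds : ∀ t, P[Z (t + 1) | ℱ t] =ᵐ[P] 0)
    (lam α : ℝ) (hlam : 0 < lam) (hlamc : lam < 1 / c) (hα : α ∈ Set.Ioo (0 : ℝ) 1)
    (S V : ℕ → Ω → ℝ)
    (hS : ∀ n ω, S n ω = ∑ t ∈ Finset.range n, Z (t + 1) ω)
    (hV : ∀ n ω, V n ω = ∑ t ∈ Finset.range n, (P[fun ω' => (Z (t + 1) ω') ^ 2 | ℱ t]) ω) :
    Supermartingale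
      (fun n ω => Real.exp (lam * S n ω - lam ^ 2 / (2 * (1 - lam * c)) * V n ω)) ℱ P ∧
    P {ω | ∃ n : ℕ, S n ω ≥ lam / (2 * (1 - lam * c)) * V n ω + Real.log (1 / α) / lam}
      ≤ ENNReal.ofReal α := by
  have hlc : lam * c < 1 := (lt_div_iff₀ hc).mp hlamc
  have hlc0 : 0 ≤ lam * c := mul_nonneg hlam.le hc.le
  set κ : ℝ := lam ^ 2 / (2 * (1 - lam * c)) with hκdef
  have hκ0 : 0 ≤ κ := by
    apply div_nonneg (sq_nonneg lam); nlinarith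
  set W : ℕ → Ω → ℝ := fun t => P[fun ω' => (Z (t + 1) ω') ^ 2 | ℱ t] with hWdef
  set M : ℕ → Ω → ℝ := fun n ω => Real.exp (lam * S n ω - κ * V n ω) with hMdef
  -- basic integrability facts
  have hZm : ∀ t, StronglyMeasurable (Z (t + 1)) := fun t => (hadapted t).mono (ℱ.le _)
  have hZint : ∀ t, Integrable (Z (t + 1)) P := by
    intro t
    refine memLp_one_iff_integrable.mp (MemLp.of_bound (hZm t).aestronglyMeasurable c ?_)
    filter_upwards [hbdd t] with ω h using by simpa [Real.norm_eq_abs] using h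
  have hZ2int : ∀ t, Integrable (fun ω => Z (t + 1) ω ^ 2) P := by
    intro t
    refine memLp_one_iff_integrable.mp (MemLp.of_bound
      ((hZm t).pow 2).aestronglyMeasurable (c ^ 2) ?_)
    filter_upwards [hbdd t] with ω h
    rw [Real.norm_eq_abs, abs_pow]
    exact pow_le_pow_left₀ (abs_nonneg _) h 2
  have hWnn : ∀ t, 0 ≤ᵐ[P] W t := fun t => condExp_nonneg (.of_forall fun ω => sq_nonneg _)
  have hVnn : ∀ n, ∀ᵐ ω ∂P, 0 ≤ V n ω := by
    intro n
    have := ae_all_iff.2 hWnn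
    filter_upwards [this] with ω h
    rw [hV]
    exact Finset.sum_nonneg fun t _ => h t
  have hSbdd : ∀ n, ∀ᵐ ω ∂P, |S n ω| ≤ n * c := by
    intro n
    filter_upwards [ae_all_iff.2 hbdd] with ω h
    rw [hS]
    calc |∑ t ∈ Finset.range n, Z (t + 1) ω| ≤ ∑ t ∈ Finset.range n, |Z (t + 1) ω| :=
          Finset.abs_sum_le_sum_abs _ _
      _ ≤ ∑ t ∈ Finset.range n, c := Finset.sum_le_sum fun t _ => h t
      _ = n * c := by simp [mul_comm]
  -- measurability
  have hSmeas : ∀ n, StronglyMeasurable[ℱ n] (S n) := by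
    intro n
    have : S n = fun ω => ∑ t ∈ Finset.range n, Z (t + 1) ω := funext (hS n)
    rw [this]
    apply Finset.stronglyMeasurable_fun_sum
    intro t ht
    exact (hadapted t).mono (ℱ.mono (Finset.mem_range.mp ht))
  have hVmeas : ∀ n, StronglyMeasurable[ℱ n] (V n) := by
    intro n
    have : V n = fun ω => ∑ t ∈ Finset.range n, W t ω := funext (hV n)
    rw [this]
    apply Finset.stronglyMeasurable_fun_sum
    intro t ht
    exact stronglyMeasurable_condExp.mono (ℱ.mono (Finset.mem_range.mp ht).le)
  have hMmeas : ∀ n, StronglyMeasurable[ℱ n] (M n) := by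
    intro n
    exact Real.continuous_exp.comp_stronglyMeasurable
      (((hSmeas n).const_mul lam).sub ((hVmeas n).const_mul κ))
  have hMnn : ∀ n ω, 0 ≤ M n ω := fun n ω => (Real.exp_pos _).le
  have hMbdd : ∀ n, ∀ᵐ ω ∂P, ‖M n ω‖ ≤ Real.exp (lam * (n * c)) := by
    intro n
    filter_upwards [hSbdd n, hVnn n] with ω h1 h2
    rw [Real.norm_eq_abs, abs_of_nonneg (hMnn n ω), Real.exp_le_exp]
    have : lam * S n ω ≤ lam * (n * c) :=
      mul_le_mul_of_nonneg_left ((abs_le.mp h1).2) hlam.le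
    nlinarith
  have hMint : ∀ n, Integrable (M n) P := by
    intro n
    exact memLp_one_iff_integrable.mp (MemLp.of_bound
      ((hMmeas n).mono (ℱ.le n)).aestronglyMeasurable _ (hMbdd n))
  -- the supermartingale property
  have hsuper : Supermartingale M ℱ P := by
    refine supermartingale_nat (fun n => hMmeas n) hMint ?_
    intro i
    set G : Ω → ℝ := fun ω => M i ω * Real.exp (-κ * W i ω) with hGdef
    set E : Ω → ℝ := fun ω => Real.exp (lam * Z (i + 1) ω) with hEdef
    have hME : M (i + 1) = G * E := by
      funext ω
      simp only [hMdef, hGdef, hEdef, Pi.mul_apply]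
      rw [← Real.exp_add, ← Real.exp_add]
      congr 1
      rw [hS (i+1), hV (i+1), Finset.sum_range_succ, Finset.sum_range_succ, ← hS i, ← hV i]
      ring
    have hGmeas : StronglyMeasurable[ℱ i] G :=
      (hMmeas i).mul (Real.continuous_exp.comp_stronglyMeasurable
        (stronglyMeasurable_condExp.const_mul (-κ)))
    have hEbdd : ∀ᵐ ω ∂P, E ω ≤ Real.exp (lam * c) := by
      filter_upwards [hbdd i] with ω h
      rw [hEdef, Real.exp_le_exp]
      exact mul_le_mul_of_nonneg_left ((abs_le.mp h).2) hlam.le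
    have hEint : Integrable E P := by
      refine memLp_one_iff_integrable.mp (MemLp.of_bound
        ((Real.continuous_exp.comp_stronglyMeasurable
          ((hZm i).const_mul lam)).aestronglyMeasurable) (Real.exp (lam * c)) ?_)
      filter_upwards [hEbdd] with ω h
      rwa [Real.norm_eq_abs, abs_of_nonneg (Real.exp_pos _).le]
    have hGE_int : Integrable (G * E) P := by
      rw [← hME]
      exact hMint (i + 1)
    -- the key conditional bound
    have hq_int : Integrable ((fun _ => (1:ℝ)) + lam • Z (i + 1)
        + κ • fun ω => Z (i + 1) ω ^ 2) P :=
      ((integrable_const 1).add ((hZint i).smul lam)).add ((hZ2int i).smul κ)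
    have h3 : P[E | ℱ i] ≤ᵐ[P] P[(fun _ => (1:ℝ)) + lam • Z (i + 1)
        + κ • fun ω => Z (i + 1) ω ^ 2 | ℱ i] := by
      refine condExp_mono hEint hq_int ?_
      filter_upwards [hbdd i] with ω h
      have hb := exp_le_quad hlc0 hlc
        (mul_le_mul_of_nonneg_left ((abs_le.mp h).2) hlam.le : lam * Z (i+1) ω ≤ lam * c)
      simp only [Pi.add_apply, Pi.smul_apply, smul_eq_mul, hEdef]
      calc Real.exp (lam * Z (i+1) ω)
          ≤ 1 + lam * Z (i+1) ω + (2 * (1 - lam * c))⁻¹ * (lam * Z (i+1) ω) ^ 2 := hb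
        _ = 1 + lam * Z (i+1) ω + κ * Z (i+1) ω ^ 2 := by
            rw [hκdef]; field_simp
    have h4 : P[(fun _ => (1:ℝ)) + lam • Z (i + 1)
        + κ • fun ω => Z (i + 1) ω ^ 2 | ℱ i] =ᵐ[P] fun ω => 1 + κ * W i ω := by
      have e1 := condExp_add (μ := P) (m := ℱ i)
        ((integrable_const (1:ℝ)).add ((hZint i).smul lam)) ((hZ2int i).smul κ)
      have e2 := condExp_add (μ := P) (m := ℱ i) (integrable_const (1:ℝ)) ((hZint i).smul lam)
      have e3 := condExp_smul (μ := P) (m := ℱ i) lam (Z (i + 1))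
      have e4 := condExp_smul (μ := P) (m := ℱ i) κ (fun ω => Z (i + 1) ω ^ 2)
      filter_upwards [e1, e2, e3, e4, hmds i] with ω h1 h2 h3 h4 h5
      rw [h1, Pi.add_apply, h2, Pi.add_apply, h3, h4]
      rw [condExp_const (ℱ.le i)]
      simp only [Pi.smul_apply, smul_eq_mul, h5, Pi.zero_apply, mul_zero, add_zero, ← hWdef]
      rfl
    have h2 : P[G * E | ℱ i] =ᵐ[P] G * P[E | ℱ i] :=
      condExp_mul_of_stronglyMeasurable_left hGmeas hGE_int hEint
    have hGnn : ∀ ω, 0 ≤ G ω := fun ω =>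
      mul_nonneg (hMnn i ω) (Real.exp_pos _).le
    rw [hME]
    calc P[G * E | ℱ i] ≤ᵐ[P] G * P[E | ℱ i] := h2.le
      _ ≤ᵐ[P] M i := by
          filter_upwards [h3, h4, hWnn i] with ω hh3 hh4 hWω
          simp only [Pi.mul_apply]
          calc G ω * (P[E | ℱ i]) ω ≤ G ω * (1 + κ * W i ω) := by
                rw [hh4] at hh3
                exact mul_le_mul_of_nonneg_left hh3 (hGnn ω)
            _ ≤ G ω * Real.exp (κ * W i ω) :=
                mul_le_mul_of_nonneg_left (by linarith [Real.add_one_le_exp (κ * W i ω)]) (hGnn ω)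
            _ = M i ω := by
                rw [hGdef]
                simp only
                rw [mul_assoc, ← Real.exp_add]
                simp
  refine ⟨hsuper, ?_⟩
  -- Ville / time-uniform bound
  set ε : ℝ≥0 := (1/α).toNNReal with hεdef
  have hα0 := hα.1
  have hα1 := hα.2
  have hεcoe : (ε : ℝ) = 1/α := Real.coe_toNNReal _ (by positivity)
  have hiff : ∀ n ω, (S n ω ≥ lam / (2 * (1 - lam * c)) * V n ω + Real.log (1 / α) / lam)
      ↔ (ε : ℝ) ≤ M n ω := by
    intro n ω
    rw [hεcoe, hMdef]
    rw [← Real.log_le_iff_le_exp (show (0:ℝ) < 1/α by positivity)]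
    rw [ge_iff_le, ← sub_nonneg, ← sub_nonneg (a := lam * S n ω - κ * V n ω)]
    constructor
    · intro h
      have := mul_nonneg hlam.le h
      have heq : lam * (S n ω - (lam / (2 * (1 - lam * c)) * V n ω + Real.log (1 / α) / lam))
          = lam * S n ω - κ * V n ω - Real.log (1/α) := by
        rw [hκdef]; field_simp; ring
      nlinarith [this, heq]
    · intro h
      have h' : 0 ≤ (lam * S n ω - κ * V n ω - Real.log (1/α)) / lam := by positivity
      have heq : (lam * S n ω - κ * V n ω - Real.log (1/α)) / lam
          = S n ω - (lam / (2 * (1 - lam * c)) * V n ω + Real.log (1 / α) / lam) := by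
        rw [hκdef]; field_simp; ring
      linarith [heq ▸ h']
  set B : ℕ → Set Ω := fun N =>
    {ω | (ε : ℝ) ≤ (range (N + 1)).sup' nonempty_range_add_one fun k => M k ω} with hBdef
  have hBmono : Monotone B := by
    intro a b hab ω hω
    simp only [hBdef, Set.mem_setOf_eq] at *
    refine le_trans hω (Finset.sup'_mono _ (Finset.range_subset_range.2 (by omega)) _)
  have hseteq : {ω | ∃ n : ℕ, S n ω ≥ lam / (2 * (1 - lam * c)) * V n ω + Real.log (1 / α) / lam}
      = ⋃ N, B N := by
    ext ω
    simp only [Set.mem_setOf_eq, Set.mem_iUnion, hBdef]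
    constructor
    · rintro ⟨n, h⟩
      exact ⟨n, Finset.le_sup'_iff _ |>.2 ⟨n, Finset.self_mem_range_succ n, (hiff n ω).mp h⟩⟩
    · rintro ⟨N, h⟩
      obtain ⟨k, -, hk⟩ := Finset.le_sup'_iff _ |>.1 h
      exact ⟨k, (hiff k ω).mpr hk⟩
  rw [hseteq, hBmono.measure_iUnion]
  refine iSup_le fun N => ?_
  have hineq := super_maximal hsuper (fun n ω => hMnn n ω) (ε := ε) N
  have hM0 : ∫ ω, M 0 ω ∂P = 1 := by
    have : M 0 = fun _ => (1:ℝ) := by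
      funext ω
      simp [hMdef, hS 0, hV 0]
    rw [this]
    simp
  rw [hM0] at hineq
  simp only [ENNReal.ofReal_one] at hineq
  have hεne : (ε : ℝ≥0∞) ≠ 0 := by
    simp only [ne_eq, ENNReal.coe_eq_zero, hεdef, Real.toNNReal_eq_zero, not_le]
    positivity
  have hle : P (B N) ≤ (ε : ℝ≥0∞)⁻¹ :=
    ENNReal.le_inv_iff_mul_le.mpr (by rwa [mul_comm])
  refine hle.trans ?_
  have : (ε : ℝ≥0∞) = ENNReal.ofReal (1/α) := by
    rw [hεdef, ENNReal.ofReal]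
  rw [this, one_div, ENNReal.ofReal_inv_of_pos hα0, inv_inv]
end
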